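/- Assume the mean-preserving condition: for every f ∈ F, Σ_{p ∈ D} C_μ(p) · π(f | p) · (p − f) = 0 in ℝ^Ω. Then the forecasting strategy that at each period n draws the forecast f_n according to the signaling policy π(· | p_n), using randomization independent of the state process, is calibrated: almost surely Σ_{f ∈ F} (|N_T[f]|/T) ‖ω̄_T[f] − f‖ → 0 as T → ∞. Moreover, for each f ∈ F the empirical frequency of forecast f converges almost surely to Q(f) = Σ_{p ∈ D} C_μ(p) π(f | p), so the induced distribution of forecasts is the prescribed mean-preserving contraction of the distribution of conditionals. -/

import Mathlib

open Filter MeasureTheory ProbabilityTheory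

set_option linter.unusedSectionVars false
set_option linter.unusedVariables false
set_option maxHeartbeats 1000000

noncomputable section

variable {Ω : Type*} [Fintype Ω] [DecidableEq Ω]

/-- The Dirac point mass `δ_ω` as an element of the probability simplex in `ℝ^Ω`. -/
def diracVec (ω : Ω) : EuclideanSpace ℝ Ω := WithLp.toLp 2 (fun a => if a = ω then (1 : ℝ) else 0)

/-- The conditional law `p_n(x) ∈ ΔΩ` of the `n`-th coordinate given the first `n`
coordinates of `x`, for a measure `μ` on `Ω^ℕ` (junk value `0/0` on null cylinders). -/
def condLaw [MeasurableSpace Ω] (μ : Measure (ℕ → Ω)) (n : ℕ) (x : ℕ → Ω) :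
    EuclideanSpace ℝ Ω :=
  WithLp.toLp 2 (fun a => (μ {y | (∀ i < n, y i = x i) ∧ y n = a}).toReal /
    (μ {y | ∀ i < n, y i = x i}).toReal)

section lemA

variable {α : Type*} [MeasurableSpace α]

lemma bdd_integrable (μ : Measure α) [IsProbabilityMeasure μ] {f : α → ℝ} {C : ℝ}
    (hf : Measurable f) (hC : ∀ x, |f x| ≤ C) : Integrable f μ :=
  (integrable_const C).mono' hf.aestronglyMeasurable (ae_of_all _ (by simpa using hC))

lemma lemmaA (μ : Measure α) [IsProbabilityMeasure μ]
    (d : ℕ → α → ℝ) (B : ℝ) (hB : 1 ≤ B)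
    (hmeas : ∀ t, Measurable (d t))
    (hbd : ∀ t x, |d t x| ≤ B)
    (horth : ∀ T k, k = 1 ∨ k = 3 →
      ∫ x, (∑ t ∈ Finset.range T, d t x) ^ k * d T x ∂μ = 0) :
    ∀ᵐ x ∂μ, Tendsto (fun T : ℕ => (T : ℝ)⁻¹ * ∑ t ∈ Finset.range T, d t x)
      atTop (nhds 0) := by
  have hB0 : (0:ℝ) < B := lt_of_lt_of_le one_pos hB
  set S : ℕ → α → ℝ := fun T x => ∑ t ∈ Finset.range T, d t x with hS
  have hSmeas : ∀ T, Measurable (S T) := fun T => Finset.measurable_sum _ fun t _ => hmeas t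
  have hSbd : ∀ T x, |S T x| ≤ B * T := by
    intro T x
    calc |S T x| ≤ ∑ t ∈ Finset.range T, |d t x| := Finset.abs_sum_le_sum_abs _ _
    _ ≤ ∑ t ∈ Finset.range T, B := Finset.sum_le_sum fun t _ => hbd t x
    _ = B * T := by simp [mul_comm]
  have hSbd' : ∀ T x, |S T x| ≤ B * T + 1 := fun T x =>
    (hSbd T x).trans (by linarith)
  -- integrability of monomials S^k * d^j
  have hint : ∀ (T k j : ℕ), Integrable (fun x => (S T x) ^ k * (d T x) ^ j) μ := by
    intro T k j
    refine bdd_integrable μ (((hSmeas T).pow_const k).mul ((hmeas T).pow_const j))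
      (C := (B*T+1)^k * B^j) (fun x => ?_)
    rw [abs_mul, abs_pow, abs_pow]
    have h1 : |S T x| ^ k ≤ (B*T+1)^k := pow_le_pow_left₀ (abs_nonneg _) (hSbd' T x) k
    have h2 : |d T x| ^ j ≤ B ^ j := pow_le_pow_left₀ (abs_nonneg _) (hbd T x) j
    exact mul_le_mul h1 h2 (pow_nonneg (abs_nonneg _) j) (by positivity)
  have hint1 : ∀ (T k : ℕ), Integrable (fun x => (S T x) ^ k) μ := by
    intro T k
    have := hint T k 0
    simpa using this
  have hSsucc : ∀ T x, S (T+1) x = S T x + d T x := by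
    intro T x; simp [hS, Finset.sum_range_succ]
  -- second moment
  have h2 : ∀ T, ∫ x, (S T x)^2 ∂μ ≤ B^2 * T := by
    intro T
    induction T with
    | zero => simp [hS]
    | succ T ih =>
      have e1 : (fun x => (S (T+1) x)^2)
          = fun x => (S T x)^2 + (2 * ((S T x)^1 * d T x ^ 1) + (S T x)^0 * (d T x)^2) := by
        funext x; rw [hSsucc]; ring
      have i1 : Integrable (fun x => 2 * (S T x ^ 1 * d T x ^ 1)) μ := (hint T 1 1).const_mul 2
      have i2 : Integrable (fun x => S T x ^ 0 * d T x ^ 2) μ := hint T 0 2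
      have i12 : Integrable (fun x => 2 * (S T x ^ 1 * d T x ^ 1) + S T x ^ 0 * d T x ^ 2) μ :=
        i1.add i2
      rw [e1, integral_add (hint1 T 2) i12, integral_add i1 i2, integral_const_mul]
      have horth1 : ∫ x, (S T x)^1 * d T x ^ 1 ∂μ = 0 := by
        simpa using horth T 1 (Or.inl rfl)
      have hd2 : ∫ x, (S T x)^0 * (d T x)^2 ∂μ ≤ B^2 := by
        calc ∫ x, (S T x)^0 * (d T x)^2 ∂μ ≤ ∫ _x, B^2 ∂μ := by
              refine integral_mono (hint T 0 2) (integrable_const _) (fun x => ?_)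
              simp only [pow_zero, one_mul]
              rw [← sq_abs]
              exact pow_le_pow_left₀ (abs_nonneg _) (hbd T x) 2
        _ = B^2 := by simp
      push_cast
      nlinarith [hd2, horth1, ih]
  -- fourth moment
  have h4 : ∀ T, ∫ x, (S T x)^4 ∂μ ≤ 7 * B^4 * T^2 := by
    intro T
    induction T with
    | zero => simp [hS]
    | succ T ih =>
      have e1 : (fun x => (S (T+1) x)^4)
          = fun x => (S T x)^4 + (4 * ((S T x)^3 * d T x ^ 1) +
              (6 * ((S T x)^2 * (d T x)^2) + (4 * ((S T x)^1 * (d T x)^3)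
                + (S T x)^0 * (d T x)^4))) := by
        funext x; rw [hSsucc]; ring
      have i1 : Integrable (fun x => 4 * (S T x ^ 3 * d T x ^ 1)) μ := (hint T 3 1).const_mul 4
      have i2 : Integrable (fun x => 6 * (S T x ^ 2 * d T x ^ 2)) μ := (hint T 2 2).const_mul 6
      have i3 : Integrable (fun x => 4 * (S T x ^ 1 * d T x ^ 3)) μ := (hint T 1 3).const_mul 4
      have i4 : Integrable (fun x => S T x ^ 0 * d T x ^ 4) μ := hint T 0 4
      have i34 : Integrable (fun x => 4 * (S T x ^ 1 * d T x ^ 3) + S T x ^ 0 * d T x ^ 4) μ :=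
        i3.add i4
      have i234 : Integrable (fun x => 6 * (S T x ^ 2 * d T x ^ 2) +
          (4 * (S T x ^ 1 * d T x ^ 3) + S T x ^ 0 * d T x ^ 4)) μ := i2.add i34
      have i1234 : Integrable (fun x => 4 * (S T x ^ 3 * d T x ^ 1) +
          (6 * (S T x ^ 2 * d T x ^ 2) +
            (4 * (S T x ^ 1 * d T x ^ 3) + S T x ^ 0 * d T x ^ 4))) μ := i1.add i234
      rw [e1, integral_add (hint1 T 4) i1234, integral_add i1 i234, integral_add i2 i34,
        integral_add i3 i4, integral_const_mul, integral_const_mul, integral_const_mul]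
      have horth3 : ∫ x, (S T x)^3 * d T x ^ 1 ∂μ = 0 := by
        simpa using horth T 3 (Or.inr rfl)
      -- bounds for the remaining terms
      have hdB2 : ∀ x, (d T x)^2 ≤ B^2 := by
        intro x; rw [← sq_abs]; exact pow_le_pow_left₀ (abs_nonneg _) (hbd T x) 2
      have hdB4 : ∀ x, (d T x)^4 ≤ B^4 := by
        intro x
        have : (d T x)^4 = ((d T x)^2)^2 := by ring
        have h4 : (B:ℝ)^4 = (B^2)^2 := by ring
        rw [this, h4]
        exact pow_le_pow_left₀ (sq_nonneg _) (hdB2 x) 2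
      have hb2 : ∫ x, (S T x)^2 * (d T x)^2 ∂μ ≤ B^4 * T := by
        calc ∫ x, (S T x)^2 * (d T x)^2 ∂μ ≤ ∫ x, B^2 * (S T x)^2 ∂μ := by
              refine integral_mono (hint T 2 2) ((hint1 T 2).const_mul _) (fun x => ?_)
              have h := hdB2 x
              nlinarith [sq_nonneg (S T x)]
        _ = B^2 * ∫ x, (S T x)^2 ∂μ := integral_const_mul _ _
        _ ≤ B^2 * (B^2 * T) := mul_le_mul_of_nonneg_left (h2 T) (sq_nonneg B)
        _ = B^4 * T := by ring
      have hb3 : ∫ x, (S T x)^1 * (d T x)^3 ∂μ ≤ B^4 * T + B^4 := by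
        have iadd : Integrable (fun x => B^2 * (S T x)^2 + B^4) μ :=
          ((hint1 T 2).const_mul _).add (integrable_const _)
        calc ∫ x, (S T x)^1 * (d T x)^3 ∂μ
            ≤ ∫ x, B^2 * (S T x)^2 + B^4 ∂μ := by
              refine integral_mono (hint T 1 3) iadd (fun x => ?_)
              have hd2B := hdB2 x
              have hd4B := hdB4 x
              have hsd : S T x * (d T x)^3 ≤ ((S T x)^2 * (d T x)^2 + (d T x)^4)/2 := by
                nlinarith [sq_nonneg (S T x * d T x + (d T x)^2),
                  sq_nonneg (S T x * d T x - (d T x)^2)]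
              simp only [pow_one]
              nlinarith [sq_nonneg (S T x), sq_nonneg B]
        _ = B^2 * (∫ x, (S T x)^2 ∂μ) + B^4 := by
              rw [integral_add ((hint1 T 2).const_mul _) (integrable_const _),
                integral_const_mul]
              simp
        _ ≤ B^2 * (B^2 * T) + B^4 :=
              add_le_add (mul_le_mul_of_nonneg_left (h2 T) (sq_nonneg B)) le_rfl
        _ = B^4 * T + B^4 := by ring
      have hb4 : ∫ x, (S T x)^0 * (d T x)^4 ∂μ ≤ B^4 := by
        calc ∫ x, (S T x)^0 * (d T x)^4 ∂μ ≤ ∫ _x, B^4 ∂μ := by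
              refine integral_mono (hint T 0 4) (integrable_const _) (fun x => ?_)
              simp only [pow_zero, one_mul]
              exact hdB4 x
        _ = B^4 := by simp
      push_cast
      have hBT : 0 ≤ B^4 * T := mul_nonneg (by positivity) (Nat.cast_nonneg T)
      have hB4 : (0:ℝ) < B^4 := by positivity
      nlinarith [ih, hb2, hb3, hb4, horth3, hBT, hB4]
  -- normalized averages
  set u : ℕ → α → ℝ := fun T x => (T:ℝ)⁻¹ * S T x with hu
  have humeas : ∀ T, Measurable (u T) := fun T => (hSmeas T).const_mul _
  have huint : ∀ T, Integrable (fun x => (u T x)^4) μ := by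
    intro T
    have he : (fun x => (u T x)^4) = fun x => ((T:ℝ)⁻¹)^4 * (S T x)^4 := by
      funext x; simp only [hu]; ring
    rw [he]; exact (hint1 T 4).const_mul _
  have hu0 : ∀ x, u 0 x = 0 := by intro x; simp [hu, hS]
  have hu4 : ∀ T : ℕ, ∫ x, (u T x)^4 ∂μ ≤ 7*B^4 * ((T:ℝ)⁻¹)^2 := by
    intro T
    rcases Nat.eq_zero_or_pos T with h0 | hpos
    · subst h0
      simp only [hu0]
      simp
    have hT0 : (0:ℝ) < T := by exact_mod_cast hpos
    have he : (fun x => (u T x)^4) = fun x => ((T:ℝ)⁻¹)^4 * (S T x)^4 := by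
      funext x; simp only [hu]; ring
    rw [he, integral_const_mul]
    have h1 : ((T:ℝ)⁻¹)^4 * ∫ x, (S T x)^4 ∂μ ≤ ((T:ℝ)⁻¹)^4 * (7*B^4*(T:ℝ)^2) :=
      mul_le_mul_of_nonneg_left (h4 T) (by positivity)
    refine h1.trans (le_of_eq ?_)
    field_simp
  have hnn : ∀ T x, 0 ≤ (u T x)^4 := by
    intro T x
    have h5 : (u T x)^4 = ((u T x)^2)^2 := by ring
    rw [h5]; exact sq_nonneg _
  have hsummable : Summable (fun T : ℕ => 7*B^4 * ((T:ℝ)⁻¹)^2) := by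
    have h := Real.summable_one_div_nat_pow.mpr (le_refl 2)
    have he : (fun T : ℕ => 7*B^4 * ((T:ℝ)⁻¹)^2) = fun T : ℕ => (7*B^4) * (1/(T:ℝ)^2) := by
      funext T; rw [one_div, ← inv_pow]
    rw [he]
    exact h.mul_left _
  have hlin : ∫⁻ x, ∑' T, ENNReal.ofReal ((u T x)^4) ∂μ ≠ ⊤ := by
    rw [lintegral_tsum (fun T => ((humeas T).pow_const 4).ennreal_ofReal.aemeasurable)]
    have hone : ∀ T, ∫⁻ x, ENNReal.ofReal ((u T x)^4) ∂μ
        ≤ ENNReal.ofReal (7*B^4 * ((T:ℝ)⁻¹)^2) := by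
      intro T
      rw [← ofReal_integral_eq_lintegral_ofReal (huint T) (ae_of_all _ (hnn T))]
      exact ENNReal.ofReal_le_ofReal (hu4 T)
    refine ne_top_of_le_ne_top ?_ (ENNReal.tsum_le_tsum hone)
    rw [← ENNReal.ofReal_tsum_of_nonneg (fun T => by positivity) hsummable]
    exact ENNReal.ofReal_ne_top
  have haefin : ∀ᵐ x ∂μ, (∑' T, ENNReal.ofReal ((u T x)^4)) ≠ ⊤ := by
    filter_upwards [ae_lt_top (Measurable.ennreal_tsum
      (fun T => ((humeas T).pow_const 4).ennreal_ofReal)) hlin] with x hx using hx.ne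
  filter_upwards [haefin] with x hx
  have h1 : Tendsto (fun T => ENNReal.ofReal ((u T x)^4)) atTop (nhds 0) :=
    ENNReal.tendsto_atTop_zero_of_tsum_ne_top hx
  have h2' : Tendsto (fun T => (u T x)^4) atTop (nhds 0) := by
    have h3 := (ENNReal.tendsto_toReal (by simp : (0:ENNReal) ≠ ⊤)).comp h1
    have h3' : Tendsto (fun T => (ENNReal.ofReal ((u T x)^4)).toReal) atTop (nhds 0) := by
      simpa [Function.comp_def] using h3
    refine h3'.congr (fun T => ?_)
    exact ENNReal.toReal_ofReal (hnn T x)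
  have habs : Tendsto (fun T => |u T x|) atTop (nhds 0) := by
    have heq : ∀ T, |u T x| = ((u T x)^4) ^ ((4:ℝ)⁻¹) := by
      intro T
      have h5 : (u T x)^4 = |u T x|^4 := by
        rw [pow_abs, abs_of_nonneg (hnn T x)]
      rw [h5, ← Real.rpow_natCast |u T x| 4, ← Real.rpow_mul (abs_nonneg _)]
      norm_num
    simp only [heq]
    have hc : Tendsto (fun v : ℝ => v ^ ((4:ℝ)⁻¹)) (nhds 0) (nhds 0) := by
      have hct := (Real.continuousAt_rpow_const 0 ((4:ℝ)⁻¹) (Or.inr (by norm_num))).tendsto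
      simpa [Real.zero_rpow (by norm_num : ((4:ℝ)⁻¹) ≠ 0)] using hct
    exact hc.comp h2'
  have hfin : Tendsto (fun T => u T x) atTop (nhds 0) := by
    have hneg : Tendsto (fun T => -|u T x|) atTop (nhds 0) := by
      simpa using habs.neg
    exact tendsto_of_tendsto_of_tendsto_of_le_of_le hneg habs
      (fun T => neg_abs_le _) (fun T => le_abs_self _)
  exact hfin

end lemA

section main
variable [MeasurableSpace Ω] [MeasurableSingletonClass Ω]

lemma condLaw_local (μ : Measure (ℕ → Ω)) (n : ℕ) (x y : ℕ → Ω)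
    (hxy : ∀ i < n, x i = y i) : condLaw μ n x = condLaw μ n y := by
  have h1 : {z : ℕ → Ω | ∀ i < n, z i = x i} = {z : ℕ → Ω | ∀ i < n, z i = y i} := by
    ext z; constructor <;> intro hz i hi <;> rw [hz i hi]
    · exact hxy i hi
    · exact (hxy i hi).symm
  unfold condLaw
  congr 1
  funext a
  show (μ {z | (∀ i < n, z i = x i) ∧ z n = a}).toReal / (μ {z | ∀ i < n, z i = x i}).toReal
    = (μ {z | (∀ i < n, z i = y i) ∧ z n = a}).toReal / (μ {z | ∀ i < n, z i = y i}).toReal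
  have h2 : {z : ℕ → Ω | (∀ i < n, z i = x i) ∧ z n = a}
      = {z : ℕ → Ω | (∀ i < n, z i = y i) ∧ z n = a} := by
    ext z
    simp only [Set.mem_setOf_eq]
    constructor <;> rintro ⟨hz, hza⟩ <;> refine ⟨fun i hi => ?_, hza⟩ <;> rw [hz i hi]
    · exact hxy i hi
    · exact (hxy i hi).symm
  rw [h1, h2]

section cyl
variable [Nonempty Ω]

/-- projection to the first `T` coordinates -/
def projT (T : ℕ) (x : ℕ → Ω) : Fin T → Ω := fun i => x i.val

/-- extension of a finite word by junk -/
def extT (T : ℕ) (w : Fin T → Ω) : ℕ → Ω :=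
  fun i => if hi : i < T then w ⟨i, hi⟩ else Classical.arbitrary Ω

lemma extT_agree (T : ℕ) (x : ℕ → Ω) : ∀ i < T, extT T (projT T x) i = x i := by
  intro i hi; simp [extT, projT, dif_pos hi]

lemma projT_measurable (T : ℕ) : Measurable (projT (Ω := Ω) T) :=
  measurable_pi_lambda _ (fun i => measurable_pi_apply _)

lemma measurableSet_finword (T : ℕ) (s : Set (Fin T → Ω)) : MeasurableSet s :=
  s.to_countable.measurableSet

open Classical in
lemma cyl_orth (μ : Measure (ℕ → Ω)) [IsProbabilityMeasure μ] (T : ℕ)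
    (p : EuclideanSpace ℝ Ω) (a : Ω)
    (h : (ℕ → Ω) → ℝ) (hmeas : Measurable h)
    (hloc : ∀ x y : ℕ → Ω, (∀ i < T, x i = y i) → h x = h y)
    (Cb : ℝ) (hbd : ∀ x, |h x| ≤ Cb) :
    ∫ x, h x * ((if condLaw μ T x = p then (1:ℝ) else 0) *
      ((if x T = a then (1:ℝ) else 0) - p a)) ∂μ = 0 := by
  classical
  set g : (ℕ → Ω) → ℝ := fun x => h x * ((if condLaw μ T x = p then (1:ℝ) else 0) *
      ((if x T = a then (1:ℝ) else 0) - p a)) with hg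
  have hcl : ∀ x, condLaw μ T x = condLaw μ T (extT T (projT T x)) :=
    fun x => condLaw_local μ T x _ (fun i hi => (extT_agree T x i hi).symm)
  -- measurability of g
  have mc : Measurable (fun x : ℕ → Ω => if condLaw μ T x = p then (1:ℝ) else 0) := by
    have hset : {x : ℕ → Ω | condLaw μ T x = p}
        = projT T ⁻¹' {w | condLaw μ T (extT T w) = p} := by
      ext x
      simp only [Set.mem_setOf_eq, Set.mem_preimage]
      rw [← hcl x]
    have hsetm : MeasurableSet {x : ℕ → Ω | condLaw μ T x = p} := by
      rw [hset]
      exact (projT_measurable T) (measurableSet_finword T _)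
    exact Measurable.ite hsetm measurable_const measurable_const
  have ma : Measurable (fun x : ℕ → Ω => (if x T = a then (1:ℝ) else 0) - p a) := by
    refine Measurable.sub ?_ measurable_const
    have hBam : MeasurableSet {x : ℕ → Ω | x T = a} := by
      have he : {x : ℕ → Ω | x T = a} = (fun f : ℕ → Ω => f T) ⁻¹' {a} := rfl
      rw [he]; exact (measurable_pi_apply T) (measurableSet_singleton a)
    exact Measurable.ite hBam measurable_const measurable_const
  have mg : Measurable g := hmeas.mul (mc.mul ma)
  have gbd : ∀ x, |g x| ≤ Cb * (1 + |p a|) := by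
    intro x
    rw [hg, abs_mul, abs_mul]
    have h1 : |if condLaw μ T x = p then (1:ℝ) else 0| ≤ 1 := by
      split <;> simp
    have h2 : |(if x T = a then (1:ℝ) else 0) - p a| ≤ 1 + |p a| := by
      refine (abs_sub _ _).trans ?_
      gcongr
      split <;> simp
    have hCb0 : 0 ≤ Cb := le_trans (abs_nonneg _) (hbd x)
    calc |h x| * (|if condLaw μ T x = p then (1:ℝ) else 0| * |(if x T = a then (1:ℝ) else 0) - p a|)
        ≤ Cb * (1 * (1 + |p a|)) := by
          refine mul_le_mul (hbd x) ?_ (by positivity) hCb0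
          refine mul_le_mul h1 h2 (abs_nonneg _) zero_le_one
    _ = Cb * (1 + |p a|) := by ring
  -- decompose over cylinders
  set Fw : (Fin T → Ω) → (ℕ → Ω) → ℝ := fun w x => if projT T x = w then g x else 0 with hFw
  have hsum : ∀ x, g x = ∑ w : Fin T → Ω, Fw w x := by
    intro x
    rw [hFw]
    simp only []
    rw [Finset.sum_ite_eq (Finset.univ) (projT T x) (fun _ => g x)]
    simp
  have hFint : ∀ w, Integrable (Fw w) μ := by
    intro w
    refine (integrable_const (Cb * (1 + |p a|))).mono'
      ((Measurable.ite ((projT_measurable T) (measurableSet_finword T {w})) mg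
        measurable_const).aestronglyMeasurable) (ae_of_all _ (fun x => ?_))
    simp only [hFw]
    split
    · simpa using gbd x
    · simp only [norm_zero]
      exact le_trans (abs_nonneg (g x)) (gbd x)
  have hdecomp : ∫ x, g x ∂μ = ∑ w : Fin T → Ω, ∫ x, Fw w x ∂μ := by
    rw [← integral_finset_sum _ (fun w _ => hFint w)]
    exact integral_congr_ae (ae_of_all _ (fun x => hsum x))
  rw [show (∫ x, h x * ((if condLaw μ T x = p then (1:ℝ) else 0) *
      ((if x T = a then (1:ℝ) else 0) - p a)) ∂μ) = ∫ x, g x ∂μ from rfl, hdecomp]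
  -- each cylinder term vanishes
  refine Finset.sum_eq_zero (fun w _ => ?_)
  set Aw : Set (ℕ → Ω) := projT T ⁻¹' {w} with hAw
  have hAwm : MeasurableSet Aw := (projT_measurable T) (measurableSet_finword T {w})
  set Ba : Set (ℕ → Ω) := {x | x T = a} with hBa
  have hBam : MeasurableSet Ba := by
    have he : Ba = (fun f : ℕ → Ω => f T) ⁻¹' {a} := rfl
    rw [he]; exact (measurable_pi_apply T) (measurableSet_singleton a)
  set cw : ℝ := h (extT T w) * (if condLaw μ T (extT T w) = p then (1:ℝ) else 0) with hcw
  have hFeq : ∀ x, Fw w x = Aw.indicator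
      (fun x => cw * ((if x T = a then (1:ℝ) else 0) - p a)) x := by
    intro x
    simp only [hFw, Set.indicator_apply, hAw, Set.mem_preimage, Set.mem_singleton_iff]
    split
    · rename_i hx
      have hagree : ∀ i < T, x i = extT T w i := by
        intro i hi
        rw [← hx]
        exact (extT_agree T x i hi).symm
      have e1 : h x = h (extT T w) := hloc _ _ hagree
      have e2 : condLaw μ T x = condLaw μ T (extT T w) := condLaw_local μ T _ _ hagree
      have e0 : g x = h x * ((if condLaw μ T x = p then (1:ℝ) else 0) *
          ((if x T = a then (1:ℝ) else 0) - p a)) := rfl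
      rw [e0, e1, e2, hcw]
      ring
    · rfl
  rw [integral_congr_ae (ae_of_all _ hFeq), integral_indicator hAwm]
  have hint1 : Integrable (fun x : ℕ → Ω => if x T = a then (1:ℝ) else 0) (μ.restrict Aw) := by
    refine (integrable_const (1:ℝ)).mono' ((Measurable.ite (hBam) measurable_const
      measurable_const).aestronglyMeasurable) (ae_of_all _ (fun x => ?_))
    split <;> simp
  have e3 : ∫ x in Aw, cw * ((if x T = a then (1:ℝ) else 0) - p a) ∂μ
      = cw * ((μ (Ba ∩ Aw)).toReal - p a * (μ Aw).toReal) := by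
    rw [integral_const_mul]
    congr 1
    rw [integral_sub hint1 (integrable_const _)]
    congr 1
    · have : (fun x : ℕ → Ω => if x T = a then (1:ℝ) else 0)
          = fun x => Ba.indicator (fun _ => (1:ℝ)) x := by
        funext x
        simp [hBa, Set.indicator_apply]
      rw [this, integral_indicator_const (1:ℝ) hBam, measureReal_def, Measure.restrict_apply hBam]
      simp
    · rw [integral_const]
      simp [mul_comm, measureReal_def]
  rw [e3]
  -- case analysis
  by_cases hcond : condLaw μ T (extT T w) = p
  · by_cases hnull : μ Aw = 0
    · have h1 : μ (Ba ∩ Aw) = 0 := measure_mono_null Set.inter_subset_right hnull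
      rw [h1, hnull]
      simp
    · -- key computation: p a is the conditional probability
      have hsets1 : {y : ℕ → Ω | ∀ i < T, y i = extT T w i} = Aw := by
        ext y
        simp only [Set.mem_setOf_eq, hAw, Set.mem_preimage, Set.mem_singleton_iff]
        constructor
        · intro hy
          funext i
          show y i.val = w i
          rw [hy i.val i.isLt]
          simp [extT, i.isLt]
        · intro hy i hi
          have he : y i = projT T y ⟨i, hi⟩ := rfl
          rw [he, hy]
          simp [extT, hi]
      have hsets2 : {y : ℕ → Ω | (∀ i < T, y i = extT T w i) ∧ y T = a} = Ba ∩ Aw := by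
        ext y
        simp only [Set.mem_setOf_eq, Set.mem_inter_iff]
        rw [show (y ∈ Ba) = (y T = a) from rfl, ← hsets1]
        simp only [Set.mem_setOf_eq]
        tauto
      have hpa : p a = (μ (Ba ∩ Aw)).toReal / (μ Aw).toReal := by
        rw [← hcond]
        show (μ {y | (∀ i < T, y i = extT T w i) ∧ y T = a}).toReal
          / (μ {y | ∀ i < T, y i = extT T w i}).toReal = _
        rw [hsets1, hsets2]
      have htr : (μ Aw).toReal ≠ 0 := by
        simp [ENNReal.toReal_ne_zero, hnull, measure_ne_top μ Aw]
      rw [hpa, div_mul_cancel₀ _ htr]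
      simp
  · rw [hcw, if_neg hcond]
    simp

open Classical in
lemma measurable_ind_condLaw (μ : Measure (ℕ → Ω)) (t : ℕ) (p : EuclideanSpace ℝ Ω) :
    Measurable (fun x : ℕ → Ω => if condLaw μ t x = p then (1:ℝ) else 0) := by
  have hcl : ∀ x, condLaw μ t x = condLaw μ t (extT t (projT t x)) :=
    fun x => condLaw_local μ t x _ (fun i hi => (extT_agree t x i hi).symm)
  have hset : {x : ℕ → Ω | condLaw μ t x = p}
      = projT t ⁻¹' {w | condLaw μ t (extT t w) = p} := by
    ext x
    simp only [Set.mem_setOf_eq, Set.mem_preimage]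
    rw [← hcl x]
  have hsetm : MeasurableSet {x : ℕ → Ω | condLaw μ t x = p} := by
    rw [hset]
    exact (projT_measurable t) (measurableSet_finword t _)
  exact Measurable.ite hsetm measurable_const measurable_const

open Classical in
lemma measurable_ind_coord (t : ℕ) (a : Ω) :
    Measurable (fun x : ℕ → Ω => if x t = a then (1:ℝ) else 0) := by
  have hBam : MeasurableSet {x : ℕ → Ω | x t = a} := by
    have he : {x : ℕ → Ω | x t = a} = (fun f : ℕ → Ω => f t) ⁻¹' {a} := rfl
    rw [he]; exact (measurable_pi_apply t) (measurableSet_singleton a)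
  exact Measurable.ite hBam measurable_const measurable_const

open Classical in
lemma stage1 (μ : Measure (ℕ → Ω)) [IsProbabilityMeasure μ]
    (p : EuclideanSpace ℝ Ω) (a : Ω) :
    ∀ᵐ x ∂μ, Tendsto (fun T : ℕ => (T:ℝ)⁻¹ * ∑ t ∈ Finset.range T,
      (if condLaw μ t x = p then (1:ℝ) else 0) * ((if x t = a then (1:ℝ) else 0) - p a))
      atTop (nhds 0) := by
  set d : ℕ → (ℕ → Ω) → ℝ := fun t x =>
    (if condLaw μ t x = p then (1:ℝ) else 0) * ((if x t = a then (1:ℝ) else 0) - p a) with hd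
  have hdmeas : ∀ t, Measurable (d t) :=
    fun t => (measurable_ind_condLaw μ t p).mul ((measurable_ind_coord t a).sub measurable_const)
  have hdbd : ∀ t x, |d t x| ≤ 1 + |p a| := by
    intro t x
    rw [hd]
    simp only []
    rw [abs_mul]
    have h1 : |if condLaw μ t x = p then (1:ℝ) else 0| ≤ 1 := by split <;> simp
    have h2 : |(if x t = a then (1:ℝ) else 0) - p a| ≤ 1 + |p a| := by
      refine (abs_sub _ _).trans ?_
      gcongr
      split <;> simp
    calc |if condLaw μ t x = p then (1:ℝ) else 0| * |(if x t = a then (1:ℝ) else 0) - p a|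
        ≤ 1 * (1 + |p a|) := mul_le_mul h1 h2 (abs_nonneg _) zero_le_one
    _ = 1 + |p a| := one_mul _
  have hdloc : ∀ t, ∀ x y : ℕ → Ω, (∀ i < t + 1, x i = y i) → d t x = d t y := by
    intro t x y hxy
    rw [hd]
    simp only []
    rw [condLaw_local μ t x y (fun i hi => hxy i (Nat.lt_succ_of_lt hi)),
      hxy t (Nat.lt_succ_self t)]
  have horth : ∀ T k, k = 1 ∨ k = 3 →
      ∫ x, (∑ t ∈ Finset.range T, d t x) ^ k * d T x ∂μ = 0 := by
    intro T k hk
    have hSloc : ∀ x y : ℕ → Ω, (∀ i < T, x i = y i) →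
        (∑ t ∈ Finset.range T, d t x) ^ k = (∑ t ∈ Finset.range T, d t y) ^ k := by
      intro x y hxy
      congr 1
      refine Finset.sum_congr rfl (fun t ht => ?_)
      have ht' : t < T := Finset.mem_range.mp ht
      exact hdloc t x y (fun i hi => hxy i (lt_of_lt_of_le hi ht'))
    have hSbd : ∀ x, |(∑ t ∈ Finset.range T, d t x) ^ k| ≤ ((1 + |p a|) * T) ^ k := by
      intro x
      rw [abs_pow]
      refine pow_le_pow_left₀ (abs_nonneg _) ?_ k
      calc |∑ t ∈ Finset.range T, d t x| ≤ ∑ t ∈ Finset.range T, |d t x| :=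
            Finset.abs_sum_le_sum_abs _ _
      _ ≤ ∑ _t ∈ Finset.range T, (1 + |p a|) := Finset.sum_le_sum fun t _ => hdbd t x
      _ = (1 + |p a|) * T := by rw [Finset.sum_const, Finset.card_range, nsmul_eq_mul]; ring
    exact cyl_orth μ T p a _ ((Finset.measurable_sum _ fun t _ => hdmeas t).pow_const k)
      hSloc _ hSbd
  exact lemmaA μ d (1 + |p a|) (by simp [abs_nonneg]) hdmeas hdbd horth

open Classical in
lemma stage1_freq (μ : Measure (ℕ → Ω)) [IsProbabilityMeasure μ]
    (p : EuclideanSpace ℝ Ω) (a : Ω) (c : ℝ)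
    (hCp : ∀ᵐ x ∂μ, Tendsto (fun N : ℕ => (N:ℝ)⁻¹ *
      ∑ n ∈ Finset.range N, (if condLaw μ n x = p then (1:ℝ) else 0)) atTop (nhds c)) :
    ∀ᵐ x ∂μ, Tendsto (fun T : ℕ => (T:ℝ)⁻¹ * ∑ t ∈ Finset.range T,
      (if condLaw μ t x = p then (1:ℝ) else 0) * (if x t = a then (1:ℝ) else 0))
      atTop (nhds (c * p a)) := by
  filter_upwards [stage1 μ p a, hCp] with x h0 hc
  have heq : ∀ T : ℕ, (T:ℝ)⁻¹ * ∑ t ∈ Finset.range T,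
      (if condLaw μ t x = p then (1:ℝ) else 0) * (if x t = a then (1:ℝ) else 0)
      = ((T:ℝ)⁻¹ * ∑ t ∈ Finset.range T,
          (if condLaw μ t x = p then (1:ℝ) else 0) * ((if x t = a then (1:ℝ) else 0) - p a))
        + p a * ((T:ℝ)⁻¹ * ∑ t ∈ Finset.range T,
          (if condLaw μ t x = p then (1:ℝ) else 0)) := by
    intro T
    have hsplit : ∀ t, (if condLaw μ t x = p then (1:ℝ) else 0) * (if x t = a then (1:ℝ) else 0)
        = (if condLaw μ t x = p then (1:ℝ) else 0) * ((if x t = a then (1:ℝ) else 0) - p a)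
          + p a * (if condLaw μ t x = p then (1:ℝ) else 0) := fun t => by ring
    simp only [hsplit]
    rw [Finset.sum_add_distrib, ← Finset.mul_sum]
    ring
  have hlim := h0.add (hc.const_mul (p a))
  rw [zero_add] at hlim
  refine Tendsto.congr (fun T => (heq T).symm) ?_
  convert hlim using 2
  ring

end cyl

section stage2
variable {Θ : Type*} [MeasurableSpace Θ]

open Classical in
lemma stage2 (ν : Measure Θ) [IsProbabilityMeasure ν]
    (U : ℕ → Θ → ℝ) (hUmeas : ∀ n, Measurable (U n))
    (hUindep : iIndepFun U ν)
    (S : Set ℝ) (hS : MeasurableSet S) (ρ : ℝ) (hρ0 : 0 ≤ ρ) (hρ1 : ρ ≤ 1)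
    (hPr : ∀ t, ∫ θ, (if U t θ ∈ S then (1:ℝ) else 0) ∂ν = ρ)
    (b : ℕ → ℝ) (hb : ∀ t, b t = 0 ∨ b t = 1) :
    ∀ᵐ θ ∂ν, Tendsto (fun T : ℕ => (T:ℝ)⁻¹ * ∑ t ∈ Finset.range T,
      b t * ((if U t θ ∈ S then (1:ℝ) else 0) - ρ)) atTop (nhds 0) := by
  set d : ℕ → Θ → ℝ := fun t θ => b t * ((if U t θ ∈ S then (1:ℝ) else 0) - ρ) with hd
  have hind : ∀ t, Measurable (fun θ => if U t θ ∈ S then (1:ℝ) else 0) := by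
    intro t
    have he : (fun θ => if U t θ ∈ S then (1:ℝ) else 0)
        = (fun r : ℝ => if r ∈ S then (1:ℝ) else 0) ∘ U t := rfl
    rw [he]
    exact (Measurable.ite hS measurable_const measurable_const).comp (hUmeas t)
  have hdmeas : ∀ t, Measurable (d t) := fun t => ((hind t).sub measurable_const).const_mul _
  have hb01 : ∀ t, 0 ≤ b t ∧ b t ≤ 1 := fun t => by rcases hb t with h|h <;> simp [h]
  have hdbd : ∀ t θ, |d t θ| ≤ 1 := by
    intro t θ
    rw [hd]
    simp only []
    rw [abs_mul]
    have h2 : |(if U t θ ∈ S then (1:ℝ) else 0) - ρ| ≤ 1 := by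
      rw [abs_sub_le_iff]
      constructor <;> [skip; skip] <;> split <;> simp <;> linarith
    calc |b t| * |(if U t θ ∈ S then (1:ℝ) else 0) - ρ| ≤ 1 * 1 := by
          refine mul_le_mul ?_ h2 (abs_nonneg _) zero_le_one
          rw [abs_of_nonneg (hb01 t).1]; exact (hb01 t).2
    _ = 1 := one_mul 1
  have hdint : ∀ t, Integrable (d t) ν :=
    fun t => bdd_integrable ν (hdmeas t) (hdbd t)
  have hdT0 : ∀ t, ∫ θ, d t θ ∂ν = 0 := by
    intro t
    rw [hd]
    simp only []
    rw [integral_const_mul, integral_sub (bdd_integrable ν (C := 1) (hind t)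
      (fun θ => by split <;> simp)) (integrable_const _), hPr t, integral_const]
    simp
  have horth : ∀ T k, k = 1 ∨ k = 3 →
      ∫ θ, (∑ t ∈ Finset.range T, d t θ) ^ k * d T θ ∂ν = 0 := by
    intro T k _
    have hdisj : Disjoint (Finset.range T) ({T} : Finset ℕ) := by
      simp [Finset.disjoint_singleton_right]
    have hindep0 := hUindep.indepFun_finset (Finset.range T) {T} hdisj hUmeas
    set gL : (↥(Finset.range T) → ℝ) → ℝ :=
      fun v => (∑ i : ↥(Finset.range T),
        b i.val * ((if v i ∈ S then (1:ℝ) else 0) - ρ)) ^ k with hgL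
    set gR : (↥({T} : Finset ℕ) → ℝ) → ℝ :=
      fun v => b T * ((if v ⟨T, Finset.mem_singleton_self T⟩ ∈ S then (1:ℝ) else 0) - ρ)
      with hgR
    have hindS : ∀ (ι : Type) [Fintype ι] (i : ι),
        Measurable (fun v : ι → ℝ => if v i ∈ S then (1:ℝ) else 0) := by
      intro ι _ i
      have hm : MeasurableSet {v : ι → ℝ | v i ∈ S} := by
        have he : {v : ι → ℝ | v i ∈ S} = (fun v : ι → ℝ => v i) ⁻¹' S := rfl
        rw [he]; exact (measurable_pi_apply i) hS
      exact Measurable.ite hm measurable_const measurable_const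
    have hgLmeas : Measurable gL := by
      refine Measurable.pow_const ?_ k
      refine Finset.measurable_sum _ (fun i _ => ?_)
      exact ((hindS _ i).sub measurable_const).const_mul _
    have hgRmeas : Measurable gR :=
      ((hindS _ _).sub measurable_const).const_mul _
    have hfeqL : (fun θ => (∑ t ∈ Finset.range T, d t θ) ^ k)
        = gL ∘ (fun θ (i : ↥(Finset.range T)) => U i θ) := by
      funext θ
      simp only [Function.comp_apply, hgL]
      congr 1
      exact (Finset.sum_coe_sort (Finset.range T) (fun t => d t θ)).symm
    have hfeqR : d T = gR ∘ (fun θ (i : ↥({T} : Finset ℕ)) => U i θ) := rfl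
    have hcomp : IndepFun (fun θ => (∑ t ∈ Finset.range T, d t θ) ^ k) (d T) ν := by
      rw [hfeqL, hfeqR]
      exact hindep0.comp hgLmeas hgRmeas
    have hSkbd : ∀ θ, |(∑ t ∈ Finset.range T, d t θ) ^ k| ≤ (T:ℝ) ^ k := by
      intro θ
      rw [abs_pow]
      refine pow_le_pow_left₀ (abs_nonneg _) ?_ k
      calc |∑ t ∈ Finset.range T, d t θ| ≤ ∑ t ∈ Finset.range T, |d t θ| :=
            Finset.abs_sum_le_sum_abs _ _
      _ ≤ ∑ _t ∈ Finset.range T, (1:ℝ) := Finset.sum_le_sum fun t _ => hdbd t θ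
      _ = (T:ℝ) := by simp
    have hSkmeas : Measurable (fun θ => (∑ t ∈ Finset.range T, d t θ) ^ k) :=
      (Finset.measurable_sum _ fun t _ => hdmeas t).pow_const k
    have hmul := hcomp.integral_mul_eq_mul_integral hSkmeas.aestronglyMeasurable
      (hdmeas T).aestronglyMeasurable
    calc ∫ θ, (∑ t ∈ Finset.range T, d t θ) ^ k * d T θ ∂ν
        = integral ν ((fun θ => (∑ t ∈ Finset.range T, d t θ) ^ k) * d T) := rfl
    _ = (∫ θ, (∑ t ∈ Finset.range T, d t θ) ^ k ∂ν) * ∫ θ, d T θ ∂ν := hmul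
    _ = 0 := by rw [hdT0 T]; ring
  exact lemmaA ν d 1 le_rfl hdmeas hdbd horth

open Classical in
lemma stage2_conv (ν : Measure Θ) [IsProbabilityMeasure ν]
    (U : ℕ → Θ → ℝ) (hUmeas : ∀ n, Measurable (U n))
    (hUindep : iIndepFun U ν)
    (S : Set ℝ) (hS : MeasurableSet S) (ρ : ℝ) (hρ0 : 0 ≤ ρ) (hρ1 : ρ ≤ 1)
    (hPr : ∀ t, ∫ θ, (if U t θ ∈ S then (1:ℝ) else 0) ∂ν = ρ)
    (b : ℕ → ℝ) (hb : ∀ t, b t = 0 ∨ b t = 1) (β : ℝ)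
    (hbavg : Tendsto (fun T : ℕ => (T:ℝ)⁻¹ * ∑ t ∈ Finset.range T, b t) atTop (nhds β)) :
    ∀ᵐ θ ∂ν, Tendsto (fun T : ℕ => (T:ℝ)⁻¹ * ∑ t ∈ Finset.range T,
      b t * (if U t θ ∈ S then (1:ℝ) else 0)) atTop (nhds (β * ρ)) := by
  filter_upwards [stage2 ν U hUmeas hUindep S hS ρ hρ0 hρ1 hPr b hb] with θ h0
  have heq : ∀ T : ℕ, (T:ℝ)⁻¹ * ∑ t ∈ Finset.range T, b t * (if U t θ ∈ S then (1:ℝ) else 0)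
      = ((T:ℝ)⁻¹ * ∑ t ∈ Finset.range T, b t * ((if U t θ ∈ S then (1:ℝ) else 0) - ρ))
        + ρ * ((T:ℝ)⁻¹ * ∑ t ∈ Finset.range T, b t) := by
    intro T
    have hsplit : ∀ t, b t * (if U t θ ∈ S then (1:ℝ) else 0)
        = b t * ((if U t θ ∈ S then (1:ℝ) else 0) - ρ) + ρ * b t := fun t => by ring
    simp only [hsplit]
    rw [Finset.sum_add_distrib, ← Finset.mul_sum]
    ring
  have hlim := h0.add (hbavg.const_mul ρ)
  rw [zero_add] at hlim
  refine Tendsto.congr (fun T => (heq T).symm) ?_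
  convert hlim using 2
  ring

end stage2

lemma ae_prod_of_ae_ae {γ δ : Type*} [MeasurableSpace γ] [MeasurableSpace δ]
    (μ : Measure γ) (ν : Measure δ) [SigmaFinite ν] {P : γ × δ → Prop}
    (hP : MeasurableSet {z | P z}) (h : ∀ᵐ x ∂μ, ∀ᵐ y ∂ν, P (x, y)) :
    ∀ᵐ z ∂μ.prod ν, P z := by
  rw [ae_iff]
  have hc : MeasurableSet {z : γ × δ | ¬ P z} := by
    rw [show {z : γ × δ | ¬ P z} = {z : γ × δ | P z}ᶜ from Set.compl_setOf _ ▸ rfl]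
    exact hP.compl
  rw [Measure.measure_prod_null hc]
  filter_upwards [h] with x hx
  show ν (Prod.mk x ⁻¹' {z : γ × δ | ¬ P z}) = 0
  have he : (Prod.mk x ⁻¹' {z : γ × δ | ¬ P z}) = {y | ¬ P (x, y)} := rfl
  rw [he]
  exact ae_iff.mp hx

lemma PiLp_sum_apply {ι : Type*} (s : Finset ι) (g : ι → EuclideanSpace ℝ Ω) (a : Ω) :
    (∑ t ∈ s, g t) a = ∑ t ∈ s, g t a := by
  classical
  induction s using Finset.induction with
  | empty => simp [show ((0 : EuclideanSpace ℝ Ω)) a = 0 from rfl]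
  | insert b s h ih =>
    rw [Finset.sum_insert h, Finset.sum_insert h, PiLp.add_apply, ih]

end main

open Classical in
/-- For a stationary ergodic process, the forecasting strategy that at each period draws a
forecast according to a signaling policy `pol` applied to that period's conditional, using
an independent i.i.d. uniform randomization device, is calibrated whenever `pol` satisfies
the mean-preserving condition; moreover the induced limit distribution of forecasts is
`Q(q) = Σ_p C(p) pol(q | p)`, the prescribed mean-preserving contraction of the
distribution of conditionals `C`. -/
theorem signaling_policy_is_calibrated
    [MeasurableSpace Ω] [MeasurableSingletonClass Ω]
    (μ : Measure (ℕ → Ω)) [IsProbabilityMeasure μ]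
    (herg : Ergodic (fun x : ℕ → Ω => fun n => x (n + 1)) μ)
    (D : Finset (EuclideanSpace ℝ Ω))
    (hD : ∀ᵐ x ∂μ, ∀ n, condLaw μ n x ∈ D)
    (C : EuclideanSpace ℝ Ω → ℝ)
    (hC : ∀ p ∈ D, ∀ᵐ x ∂μ, Tendsto
      (fun N : ℕ => (N : ℝ)⁻¹ *
        ∑ n ∈ Finset.range N, (if condLaw μ n x = p then (1 : ℝ) else 0))
      atTop (nhds (C p)))
    (F : Finset (EuclideanSpace ℝ Ω))
    (pol : EuclideanSpace ℝ Ω → EuclideanSpace ℝ Ω → ℝ)  -- pol p q = π(q | p)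
    (hpol0 : ∀ p ∈ D, ∀ q ∈ F, 0 ≤ pol p q)
    (hpol1 : ∀ p ∈ D, ∑ q ∈ F, pol p q = 1)
    (hmp : ∀ q ∈ F, ∑ p ∈ D, (C p * pol p q) • (p - q) = (0 : EuclideanSpace ℝ Ω))
    -- the randomization device: i.i.d. uniform-[0,1] random variables on (Θ, ν)
    {Θ : Type*} [MeasurableSpace Θ] (ν : Measure Θ) [IsProbabilityMeasure ν]
    (U : ℕ → Θ → ℝ) (hUmeas : ∀ n, Measurable (U n))
    (hUindep : iIndepFun U ν)
    (hUunif : ∀ n, Measure.map (U n) ν = volume.restrict (Set.Icc (0 : ℝ) 1))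
    -- the randomized forecast: f_n = φ(p_n, U_n), with law π(· | p)
    (φ : EuclideanSpace ℝ Ω → ℝ → EuclideanSpace ℝ Ω)
    (hφmeas : ∀ p, Measurable (φ p))
    (hφF : ∀ p ∈ D, ∀ r : ℝ, φ p r ∈ F)
    (hφlaw : ∀ p ∈ D, ∀ q ∈ F,
      volume.restrict (Set.Icc (0 : ℝ) 1) {r : ℝ | φ p r = q} = ENNReal.ofReal (pol p q)) :
    ∀ᵐ z ∂(μ.prod ν),
      (Tendsto (fun T : ℕ => ∑ q ∈ F,
          ((((Finset.range T).filter fun t => φ (condLaw μ t z.1) (U t z.2) = q).card : ℝ) / T) *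
            ‖((((Finset.range T).filter fun t => φ (condLaw μ t z.1) (U t z.2) = q).card : ℝ)⁻¹ •
                ∑ t ∈ (Finset.range T).filter fun t => φ (condLaw μ t z.1) (U t z.2) = q,
                  diracVec (z.1 t)) - q‖)
        atTop (nhds 0)) ∧
      ∀ q ∈ F, Tendsto
        (fun T : ℕ =>
          ((((Finset.range T).filter fun t => φ (condLaw μ t z.1) (U t z.2) = q).card : ℝ) / T))
        atTop (nhds (∑ p ∈ D, C p * pol p q)) := by
  haveI hne : Nonempty Ω := by
    by_contra hno
    rw [not_nonempty_iff] at hno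
    haveI hem : IsEmpty (ℕ → Ω) := ⟨fun f => hno.false (f 0)⟩
    have h1 : μ Set.univ = 1 := measure_univ
    rw [Set.univ_eq_empty_iff.mpr hem, measure_empty] at h1
    exact zero_ne_one h1
  have hSm : ∀ p q : EuclideanSpace ℝ Ω, MeasurableSet {r : ℝ | φ p r = q} := by
    intro p q
    have he : {r : ℝ | φ p r = q} = (φ p) ⁻¹' {q} := rfl
    rw [he]; exact hφmeas p (measurableSet_singleton q)
  have hPr : ∀ p ∈ D, ∀ q ∈ F, ∀ t,
      ∫ θ, (if U t θ ∈ {r : ℝ | φ p r = q} then (1:ℝ) else 0) ∂ν = pol p q := by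
    intro p hp q hq t
    have h1 : (fun θ => if U t θ ∈ {r : ℝ | φ p r = q} then (1:ℝ) else 0)
        = fun θ => (U t ⁻¹' {r : ℝ | φ p r = q}).indicator (fun _ => (1:ℝ)) θ := by
      funext θ; rw [Set.indicator_apply]; exact if_congr Iff.rfl rfl rfl
    rw [h1, integral_indicator_const (1:ℝ) ((hUmeas t) (hSm p q)), measureReal_def,
      ← Measure.map_apply (hUmeas t) (hSm p q), hUunif t, hφlaw p hp q hq]
    simp [ENNReal.toReal_ofReal (hpol0 p hp q hq)]
  have hpol_le1 : ∀ p ∈ D, ∀ q ∈ F, pol p q ≤ 1 := by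
    intro p hp q hq
    rw [← hpol1 p hp]
    exact Finset.single_le_sum (fun q' hq' => hpol0 p hp q' hq') hq
  have hmU : ∀ (p q : EuclideanSpace ℝ Ω) (t : ℕ),
      Measurable (fun z : (ℕ → Ω) × Θ =>
        if U t z.2 ∈ {r : ℝ | φ p r = q} then (1:ℝ) else 0) := by
    intro p q t
    have he : (fun z : (ℕ → Ω) × Θ => if U t z.2 ∈ {r : ℝ | φ p r = q} then (1:ℝ) else 0)
        = ((fun r : ℝ => if r ∈ {r : ℝ | φ p r = q} then (1:ℝ) else 0) ∘ U t) ∘ Prod.snd := rfl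
    rw [he]
    exact ((Measurable.ite (hSm p q) measurable_const measurable_const).comp
      (hUmeas t)).comp measurable_snd
  have hm1 : ∀ (p q : EuclideanSpace ℝ Ω) (a : Ω) (t : ℕ),
      Measurable (fun z : (ℕ → Ω) × Θ =>
        ((if condLaw μ t z.1 = p then (1:ℝ) else 0) * (if z.1 t = a then (1:ℝ) else 0))
          * (if U t z.2 ∈ {r : ℝ | φ p r = q} then (1:ℝ) else 0)) := by
    intro p q a t
    exact ((((measurable_ind_condLaw μ t p).comp measurable_fst).mul
      ((measurable_ind_coord t a).comp measurable_fst)).mul (hmU p q t))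
  have hm2 : ∀ (p q : EuclideanSpace ℝ Ω) (t : ℕ),
      Measurable (fun z : (ℕ → Ω) × Θ =>
        (if condLaw μ t z.1 = p then (1:ℝ) else 0)
          * (if U t z.2 ∈ {r : ℝ | φ p r = q} then (1:ℝ) else 0)) := by
    intro p q t
    exact (((measurable_ind_condLaw μ t p).comp measurable_fst).mul (hmU p q t))
  have HW1 : ∀ p ∈ D, ∀ q ∈ F, ∀ a : Ω, ∀ᵐ z ∂(μ.prod ν),
      Tendsto (fun T : ℕ => (T:ℝ)⁻¹ * ∑ t ∈ Finset.range T,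
        ((if condLaw μ t z.1 = p then (1:ℝ) else 0) * (if z.1 t = a then (1:ℝ) else 0))
          * (if U t z.2 ∈ {r : ℝ | φ p r = q} then (1:ℝ) else 0)) atTop
        (nhds ((C p * p a) * pol p q)) := by
    intro p hp q hq a
    refine ae_prod_of_ae_ae μ ν ?_ ?_
    · exact measurableSet_tendsto _ (fun T =>
        (Finset.measurable_sum _ (fun t _ => hm1 p q a t)).const_mul _)
    · filter_upwards [stage1_freq μ p a (C p) (hC p hp)] with x hx
      convert stage2_conv ν U hUmeas hUindep _ (hSm p q) (pol p q) (hpol0 p hp q hq)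
        (hpol_le1 p hp q hq) (fun t => by convert hPr p hp q hq t)
        (fun t => (if condLaw μ t x = p then (1:ℝ) else 0) * (if x t = a then (1:ℝ) else 0))
        (fun t => by by_cases h1 : condLaw μ t x = p <;> by_cases h2 : x t = a <;> simp [h1, h2]) (C p * p a) hx
      exact Iff.rfl
  have HW2 : ∀ p ∈ D, ∀ q ∈ F, ∀ᵐ z ∂(μ.prod ν),
      Tendsto (fun T : ℕ => (T:ℝ)⁻¹ * ∑ t ∈ Finset.range T,
        (if condLaw μ t z.1 = p then (1:ℝ) else 0)
          * (if U t z.2 ∈ {r : ℝ | φ p r = q} then (1:ℝ) else 0)) atTop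
        (nhds (C p * pol p q)) := by
    intro p hp q hq
    refine ae_prod_of_ae_ae μ ν ?_ ?_
    · exact measurableSet_tendsto _ (fun T =>
        (Finset.measurable_sum _ (fun t _ => hm2 p q t)).const_mul _)
    · filter_upwards [hC p hp] with x hx
      convert stage2_conv ν U hUmeas hUindep _ (hSm p q) (pol p q) (hpol0 p hp q hq)
        (hpol_le1 p hp q hq) (fun t => by convert hPr p hp q hq t)
        (fun t => (if condLaw μ t x = p then (1:ℝ) else 0))
        (fun t => by by_cases h1 : condLaw μ t x = p <;> simp [h1]) (C p) hx
      exact Iff.rfl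
  have hall : ∀ᵐ z ∂(μ.prod ν), ∀ i : {p // p ∈ D} × {q // q ∈ F} × Ω,
      (Tendsto (fun T : ℕ => (T:ℝ)⁻¹ * ∑ t ∈ Finset.range T,
        ((if condLaw μ t z.1 = i.1.1 then (1:ℝ) else 0)
            * (if z.1 t = i.2.2 then (1:ℝ) else 0))
          * (if U t z.2 ∈ {r : ℝ | φ i.1.1 r = i.2.1.1} then (1:ℝ) else 0)) atTop
        (nhds ((C i.1.1 * i.1.1 i.2.2) * pol i.1.1 i.2.1.1)))
      ∧ (Tendsto (fun T : ℕ => (T:ℝ)⁻¹ * ∑ t ∈ Finset.range T,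
        (if condLaw μ t z.1 = i.1.1 then (1:ℝ) else 0)
          * (if U t z.2 ∈ {r : ℝ | φ i.1.1 r = i.2.1.1} then (1:ℝ) else 0)) atTop
        (nhds (C i.1.1 * pol i.1.1 i.2.1.1))) := by
    rw [ae_all_iff]
    rintro ⟨⟨p, hp⟩, ⟨q, hq⟩, a⟩
    exact (HW1 p hp q hq a).and (HW2 p hp q hq)
  have hDz : ∀ᵐ z ∂(μ.prod ν), ∀ n, condLaw μ n z.1 ∈ D := by
    have hfst : (μ.prod ν).map Prod.fst = μ := Measure.fst_prod
    have h1 : ∀ᵐ x ∂((μ.prod ν).map Prod.fst), ∀ n, condLaw μ n x ∈ D := by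
      rw [hfst]; exact hD
    exact ae_of_ae_map measurable_fst.aemeasurable h1
  filter_upwards [hall, hDz] with z hz hdz
  have hsplitq : ∀ (q : EuclideanSpace ℝ Ω) (g : ℕ → ℝ) (t : ℕ),
      (if φ (condLaw μ t z.1) (U t z.2) = q then (1:ℝ) else 0) * g t
      = ∑ p ∈ D, ((if condLaw μ t z.1 = p then (1:ℝ) else 0) * g t)
          * (if U t z.2 ∈ {r : ℝ | φ p r = q} then (1:ℝ) else 0) := by
    intro q g t
    by_cases hc : φ (condLaw μ t z.1) (U t z.2) = q
    · rw [if_pos hc]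
      rw [Finset.sum_eq_single (condLaw μ t z.1)]
      · rw [if_pos rfl, one_mul]
        have hmem : U t z.2 ∈ {r : ℝ | φ (condLaw μ t z.1) r = q} := hc
        rw [if_pos hmem, mul_one]
      · intro p hp hpe
        rw [if_neg (fun h => hpe h.symm), zero_mul, zero_mul]
      · intro hno
        exact absurd (hdz t) hno
    · rw [if_neg hc, zero_mul]
      symm
      refine Finset.sum_eq_zero (fun p hp => ?_)
      by_cases hpc : condLaw μ t z.1 = p
      · subst hpc
        have hmem : U t z.2 ∉ {r : ℝ | φ (condLaw μ t z.1) r = q} := hc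
        rw [if_neg hmem, mul_zero]
      · rw [if_neg hpc, zero_mul, zero_mul]
  have hIcard : ∀ (q : EuclideanSpace ℝ Ω) (T : ℕ),
      ((((Finset.range T).filter fun t => φ (condLaw μ t z.1) (U t z.2) = q).card : ℝ))
      = ∑ p ∈ D, ∑ t ∈ Finset.range T,
          (if condLaw μ t z.1 = p then (1:ℝ) else 0)
            * (if U t z.2 ∈ {r : ℝ | φ p r = q} then (1:ℝ) else 0) := by
    intro q T
    calc ((((Finset.range T).filter fun t => φ (condLaw μ t z.1) (U t z.2) = q).card : ℝ))
        = ∑ t ∈ Finset.range T,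
            (if φ (condLaw μ t z.1) (U t z.2) = q then (1:ℝ) else 0) := by
          rw [Finset.card_filter]
          push_cast
          rfl
    _ = ∑ t ∈ Finset.range T, ∑ p ∈ D,
          (if condLaw μ t z.1 = p then (1:ℝ) else 0)
            * (if U t z.2 ∈ {r : ℝ | φ p r = q} then (1:ℝ) else 0) := by
          refine Finset.sum_congr rfl (fun t ht => ?_)
          have h1 := hsplitq q (fun _ => (1:ℝ)) t
          rw [mul_one] at h1
          rw [h1]
          refine Finset.sum_congr rfl (fun p hp => ?_)
          rw [mul_one]
    _ = _ := Finset.sum_comm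
  have hIvec : ∀ (q : EuclideanSpace ℝ Ω) (T : ℕ) (a : Ω),
      ((∑ t ∈ (Finset.range T).filter (fun t => φ (condLaw μ t z.1) (U t z.2) = q),
          diracVec (z.1 t)) a)
      = ∑ p ∈ D, ∑ t ∈ Finset.range T,
          ((if condLaw μ t z.1 = p then (1:ℝ) else 0) * (if z.1 t = a then (1:ℝ) else 0))
            * (if U t z.2 ∈ {r : ℝ | φ p r = q} then (1:ℝ) else 0) := by
    intro q T a
    calc ((∑ t ∈ (Finset.range T).filter (fun t => φ (condLaw μ t z.1) (U t z.2) = q),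
            diracVec (z.1 t)) a)
        = ∑ t ∈ (Finset.range T).filter (fun t => φ (condLaw μ t z.1) (U t z.2) = q),
            diracVec (z.1 t) a := PiLp_sum_apply _ _ _
    _ = ∑ t ∈ Finset.range T, (if φ (condLaw μ t z.1) (U t z.2) = q then (1:ℝ) else 0)
          * (if z.1 t = a then (1:ℝ) else 0) := by
          rw [Finset.sum_filter]
          refine Finset.sum_congr rfl (fun t ht => ?_)
          have hd : diracVec (z.1 t) a = (if z.1 t = a then (1:ℝ) else 0) := by
            show (if a = z.1 t then (1:ℝ) else 0) = _
            rcases eq_or_ne (z.1 t) a with h|h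
            · simp [h]
            · rw [if_neg (fun he => h he.symm), if_neg h]
          by_cases hc : φ (condLaw μ t z.1) (U t z.2) = q
          · rw [if_pos hc, if_pos hc, one_mul, hd]
          · rw [if_neg hc, if_neg hc, zero_mul]
    _ = ∑ t ∈ Finset.range T, ∑ p ∈ D,
          ((if condLaw μ t z.1 = p then (1:ℝ) else 0) * (if z.1 t = a then (1:ℝ) else 0))
            * (if U t z.2 ∈ {r : ℝ | φ p r = q} then (1:ℝ) else 0) := by
          refine Finset.sum_congr rfl (fun t ht => ?_)
          exact hsplitq q (fun t => (if z.1 t = a then (1:ℝ) else 0)) t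
    _ = _ := Finset.sum_comm
  constructor
  · -- calibration part
    have hterm : ∀ q ∈ F, Tendsto (fun T : ℕ =>
        ((((Finset.range T).filter fun t => φ (condLaw μ t z.1) (U t z.2) = q).card : ℝ) / T) *
          ‖((((Finset.range T).filter fun t => φ (condLaw μ t z.1) (U t z.2) = q).card : ℝ)⁻¹ •
              ∑ t ∈ (Finset.range T).filter fun t => φ (condLaw μ t z.1) (U t z.2) = q,
                diracVec (z.1 t)) - q‖) atTop (nhds 0) := by
      intro q hq
      set nn : ℕ → ℕ := fun T : ℕ =>
        (((Finset.range T).filter fun t => φ (condLaw μ t z.1) (U t z.2) = q).card) with hnn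
      set V : ℕ → EuclideanSpace ℝ Ω := fun T : ℕ =>
        ∑ t ∈ (Finset.range T).filter (fun t => φ (condLaw μ t z.1) (U t z.2) = q),
          diracVec (z.1 t) with hV
      set vec : ℕ → EuclideanSpace ℝ Ω := fun T : ℕ => ((T:ℝ))⁻¹ • (V T - ((nn T : ℕ) : ℝ) • q)
        with hvecdef
      have hw : ∀ a : Ω, Tendsto (fun T => vec T a) atTop (nhds 0) := by
        intro a
        have hcoord : ∀ T : ℕ, vec T a
            = ∑ p ∈ D, (((T:ℝ)⁻¹ * ∑ t ∈ Finset.range T,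
                ((if condLaw μ t z.1 = p then (1:ℝ) else 0) * (if z.1 t = a then (1:ℝ) else 0))
                  * (if U t z.2 ∈ {r : ℝ | φ p r = q} then (1:ℝ) else 0))
              - q a * ((T:ℝ)⁻¹ * ∑ t ∈ Finset.range T,
                (if condLaw μ t z.1 = p then (1:ℝ) else 0)
                  * (if U t z.2 ∈ {r : ℝ | φ p r = q} then (1:ℝ) else 0))) := by
          intro T
          have h1 : vec T a = (T:ℝ)⁻¹ * (V T a - (nn T : ℝ) * q a) := by
            show (((T:ℝ))⁻¹ • (V T - ((nn T : ℕ) : ℝ) • q)) a = _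
            rw [PiLp.smul_apply, PiLp.sub_apply, PiLp.smul_apply, smul_eq_mul, smul_eq_mul]
          have hIvec' : V T a = ∑ p ∈ D, ∑ t ∈ Finset.range T,
              ((if condLaw μ t z.1 = p then (1:ℝ) else 0) * (if z.1 t = a then (1:ℝ) else 0))
                * (if U t z.2 ∈ {r : ℝ | φ p r = q} then (1:ℝ) else 0) := hIvec q T a
          have hIcard' : ((nn T : ℕ) : ℝ) = ∑ p ∈ D, ∑ t ∈ Finset.range T,
              (if condLaw μ t z.1 = p then (1:ℝ) else 0)
                * (if U t z.2 ∈ {r : ℝ | φ p r = q} then (1:ℝ) else 0) := hIcard q T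
          rw [h1, hIvec', hIcard']
          rw [Finset.sum_mul, mul_sub, Finset.mul_sum, Finset.mul_sum, ← Finset.sum_sub_distrib]
          refine Finset.sum_congr rfl (fun p hp => ?_)
          ring
        have hlim : Tendsto (fun T : ℕ => ∑ p ∈ D, (((T:ℝ)⁻¹ * ∑ t ∈ Finset.range T,
                ((if condLaw μ t z.1 = p then (1:ℝ) else 0) * (if z.1 t = a then (1:ℝ) else 0))
                  * (if U t z.2 ∈ {r : ℝ | φ p r = q} then (1:ℝ) else 0))
              - q a * ((T:ℝ)⁻¹ * ∑ t ∈ Finset.range T,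
                (if condLaw μ t z.1 = p then (1:ℝ) else 0)
                  * (if U t z.2 ∈ {r : ℝ | φ p r = q} then (1:ℝ) else 0)))) atTop
            (nhds (∑ p ∈ D, ((C p * p a) * pol p q - q a * (C p * pol p q)))) := by
          refine tendsto_finset_sum _ (fun p hp => ?_)
          exact ((hz (⟨p, hp⟩, ⟨q, hq⟩, a)).1).sub (((hz (⟨p, hp⟩, ⟨q, hq⟩, a)).2).const_mul _)
        have hzero : (∑ p ∈ D, ((C p * p a) * pol p q - q a * (C p * pol p q))) = 0 := by
          have h0 : ((∑ p ∈ D, (C p * pol p q) • (p - q) : EuclideanSpace ℝ Ω)) a = 0 := by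
            rw [hmp q hq]; rfl
          have h1 : ((∑ p ∈ D, (C p * pol p q) • (p - q) : EuclideanSpace ℝ Ω)) a
              = ∑ p ∈ D, (C p * pol p q) * (p a - q a) := by
            refine (PiLp_sum_apply D (fun p => (C p * pol p q) • (p - q)) a).trans ?_
            refine Finset.sum_congr rfl (fun p hp => ?_)
            show ((C p * pol p q) • (p - q)) a = _
            rw [PiLp.smul_apply, PiLp.sub_apply, smul_eq_mul]
          have h2 : ∑ p ∈ D, (C p * pol p q) * (p a - q a) = 0 := h1.symm.trans h0
          rw [← h2]
          refine Finset.sum_congr rfl (fun p hp => ?_)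
          ring
        rw [hzero] at hlim
        exact Tendsto.congr (fun T => (hcoord T).symm) hlim
      have hvec : Tendsto vec atTop (nhds 0) := by
        have hpi : Tendsto (fun T => (WithLp.equiv 2 (Ω → ℝ)) (vec T)) atTop
            (nhds (0 : Ω → ℝ)) := by
          rw [tendsto_pi_nhds]
          intro a
          exact hw a
        have hcomp := ((PiLp.continuous_toLp 2 (fun _ : Ω => ℝ)).tendsto
          (0 : Ω → ℝ)).comp hpi
        have he0 : WithLp.toLp 2 (0 : Ω → ℝ) = (0 : EuclideanSpace ℝ Ω) := rfl
        rw [he0] at hcomp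
        refine Tendsto.congr (fun T => ?_) hcomp
        exact (WithLp.equiv 2 (Ω → ℝ)).symm_apply_apply (vec T)
      have hA : ∀ T : ℕ, ((nn T : ℝ) / T) * ‖(((nn T : ℝ))⁻¹ • V T) - q‖ = ‖vec T‖ := by
        intro T
        by_cases h0 : nn T = 0
        · have hfil : ((Finset.range T).filter
              fun t => φ (condLaw μ t z.1) (U t z.2) = q) = ∅ := Finset.card_eq_zero.mp h0
          have hV0 : V T = 0 := by simp only [hV]; rw [hfil, Finset.sum_empty]
          have hnr : ((nn T : ℕ) : ℝ) = 0 := by rw [h0]; norm_num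
          have hRHS : vec T = 0 := by
            simp only [hvecdef]
            rw [hV0, hnr, zero_smul, sub_zero, smul_zero]
          rw [hnr, hV0, hRHS]
          simp
        · have hn0 : ((nn T : ℝ)) ≠ 0 := Nat.cast_ne_zero.mpr h0
          have hTpos : 0 < T := by
            rcases Nat.eq_zero_or_pos T with hT0 | h
            · exfalso
              apply h0
              simp only [hnn]
              rw [hT0]
              simp
            · exact h
          have hT0' : ((T:ℕ):ℝ) ≠ 0 := Nat.cast_ne_zero.mpr hTpos.ne'
          have h2 : (((nn T : ℝ))⁻¹ • V T) - q = ((nn T : ℝ))⁻¹ • (V T - (nn T : ℝ) • q) := by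
            rw [smul_sub, smul_smul, inv_mul_cancel₀ hn0, one_smul]
          rw [h2]
          simp only [hvecdef]
          rw [norm_smul, norm_smul]
          simp only [norm_inv, Real.norm_natCast]
          field_simp
      have hnorm : Tendsto (fun T => ‖vec T‖) atTop (nhds 0) := by
        have hcont := (continuous_norm.tendsto (0 : EuclideanSpace ℝ Ω)).comp hvec
        simpa [Function.comp_def] using hcont
      refine Tendsto.congr (fun T => ?_) hnorm
      exact (hA T).symm
    have hsum := tendsto_finset_sum F (fun q hq => hterm q hq)
    simpa using hsum
  · intro q hq
    have heq : ∀ T : ℕ,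
        ((((Finset.range T).filter fun t => φ (condLaw μ t z.1) (U t z.2) = q).card : ℝ) / T)
        = ∑ p ∈ D, ((T:ℝ)⁻¹ * ∑ t ∈ Finset.range T,
            (if condLaw μ t z.1 = p then (1:ℝ) else 0)
              * (if U t z.2 ∈ {r : ℝ | φ p r = q} then (1:ℝ) else 0)) := by
      intro T
      rw [div_eq_inv_mul, hIcard q T, Finset.mul_sum]
    refine Tendsto.congr (fun T => (heq T).symm) ?_
    exact tendsto_finset_sum _ (fun p hp => (hz (⟨p, hp⟩, ⟨q, hq⟩, Classical.arbitrary Ω)).2)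


end
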